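/- Let ε > 0 be a real number, let X be a finite set, and let ω be a positive integer. Then there exists a finite set 𝒞 of mappings c : X → {0,1,…,ω} with |𝒞| ≤ (⌊|X|/ε⌋ + 1)^{|X|} such that for every mapping c' : X → {0,1,…,ω} there exists some c ∈ 𝒞 with ∑_{x∈X} |c(x) − c'(x)| ≤ ε·ω. -/

import Mathlib

open Finset

/-- For every `ε > 0`, finite set `X` and positive integer `ω`, there is a set `𝒞`
of at most `(⌊|X|/ε⌋ + 1)^{|X|}` mappings `c : X → {0, …, ω}` such that every mapping
`c' : X → {0, …, ω}` satisfies `∑_x |c(x) − c'(x)| ≤ ε ω` for some `c ∈ 𝒞`. -/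
theorem stmt9 {X : Type*} [Fintype X] [DecidableEq X] (ε : ℝ) (hε : 0 < ε)
    (ω : ℕ) (hω : 0 < ω) :
    ∃ 𝒞 : Finset (X → ℕ),
      (∀ c ∈ 𝒞, ∀ x, c x ≤ ω) ∧
      𝒞.card ≤ (Nat.floor ((Fintype.card X : ℝ) / ε) + 1) ^ Fintype.card X ∧
      ∀ c' : X → ℕ, (∀ x, c' x ≤ ω) →
        ∃ c ∈ 𝒞, (∑ x, |(c x : ℝ) - (c' x : ℝ)|) ≤ ε * ω := by
  rcases Nat.eq_zero_or_pos (Fintype.card X) with h0 | hpos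
  · haveI : IsEmpty X := Fintype.card_eq_zero_iff.mp h0
    refine ⟨{fun _ => 0}, ?_, ?_, ?_⟩
    · intro c _ x; exact (IsEmpty.false x).elim
    · simp [h0]
    · intro c' _
      refine ⟨fun _ => 0, Finset.mem_singleton_self _, ?_⟩
      rw [Finset.univ_eq_empty, Finset.sum_empty]
      positivity
  · set n := Fintype.card X with hn
    set s := Nat.ceil (ε * ω / n) with hs
    have hn0 : (0:ℝ) < n := by exact_mod_cast hpos
    have ht : 0 < ε * ω / n := by positivity
    have hs1 : 0 < s := Nat.ceil_pos.mpr ht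
    have hsle : ε * ω / n ≤ (s:ℝ) := Nat.le_ceil _
    have hslt : (s:ℝ) < ε * ω / n + 1 := Nat.ceil_lt_add_one ht.le
    have hdiv : ω / s ≤ Nat.floor ((n : ℝ) / ε) := by
      have h1 : (ω:ℝ) / s ≤ (n:ℝ) / ε := by
        rw [div_le_div_iff₀ (by exact_mod_cast hs1) hε]
        have := (div_le_iff₀ hn0).mp hsle
        nlinarith
      calc ω / s = Nat.floor ((ω:ℝ) / s) := by
            rw [Nat.floor_div_natCast, Nat.floor_natCast]
        _ ≤ _ := Nat.floor_le_floor h1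
    refine ⟨(Fintype.piFinset (fun _ : X => Finset.range (ω / s + 1))).image
      (fun f x => s * f x), ?_, ?_, ?_⟩
    · intro c hc x
      simp only [Finset.mem_image, Fintype.mem_piFinset, Finset.mem_range] at hc
      obtain ⟨f, hf, rfl⟩ := hc
      calc s * f x ≤ s * (ω / s) := Nat.mul_le_mul_left _ (Nat.lt_succ_iff.mp (hf x))
        _ ≤ ω := Nat.mul_div_le ω s
    · calc _ ≤ (Fintype.piFinset (fun _ : X => Finset.range (ω / s + 1))).card :=
          Finset.card_image_le
        _ = (ω / s + 1) ^ n := by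
            rw [Fintype.card_piFinset]; simp [hn]
        _ ≤ _ := Nat.pow_le_pow_left (by omega) _
    · intro c' hc'
      refine ⟨fun x => s * (c' x / s), ?_, ?_⟩
      · simp only [Finset.mem_image, Fintype.mem_piFinset, Finset.mem_range]
        exact ⟨fun x => c' x / s, fun x => Nat.lt_succ_of_le (Nat.div_le_div_right (hc' x)),
          rfl⟩
      · have key : ∀ x : X, |(↑(s * (c' x / s)) : ℝ) - (c' x : ℝ)| ≤ (s:ℝ) - 1 := by
          intro x
          have h1 : s * (c' x / s) ≤ c' x := Nat.mul_div_le _ _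
          have hdm := Nat.div_add_mod (c' x) s
          have h3 : c' x % s < s := Nat.mod_lt _ hs1
          have h4 : c' x ≤ s * (c' x / s) + (s - 1) := by omega
          have h4' : (c' x : ℝ) ≤ (s * (c' x / s) : ℕ) + ((s:ℝ) - 1) := by
            have : ((s - 1 : ℕ) : ℝ) = (s:ℝ) - 1 := by
              rw [Nat.cast_sub hs1]; simp
            calc (c' x : ℝ) ≤ ((s * (c' x / s) + (s - 1) : ℕ) : ℝ) := by exact_mod_cast h4
              _ = (s * (c' x / s) : ℕ) + ((s:ℝ) - 1) := by rw [Nat.cast_add, this]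
          have h1' : ((s * (c' x / s) : ℕ) : ℝ) ≤ (c' x : ℝ) := by exact_mod_cast h1
          rw [abs_of_nonpos (by linarith)]
          linarith
        calc (∑ x, |(↑(s * (c' x / s)) : ℝ) - (c' x : ℝ)|) ≤ ∑ _x : X, ((s:ℝ) - 1) :=
              Finset.sum_le_sum fun x _ => key x
          _ = (n : ℝ) * ((s:ℝ) - 1) := by
              rw [Finset.sum_const, Finset.card_univ, nsmul_eq_mul, hn]
          _ ≤ (n : ℝ) * (ε * ω / n) := by nlinarith
          _ = ε * ω := by field_simp
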